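/- Let g : ℝ → ℝ be nonincreasing and L_g-Lipschitz, let a < b be reals, and let η > 0. Then there exist a positive integer H, weights w ∈ ℝ^H satisfying Σ_{j=1}^J w_j ≤ 0 for every J ∈ {1, …, H}, biases b_1 ≤ b_2 ≤ ⋯ ≤ b_H, and β ∈ ℝ such that the function N(x) = Σ_{h=1}^H w_h max(x − b_h, 0) + β satisfies |N(x) − g(x)| ≤ η for all x ∈ [a, b]. Moreover, H can be taken such that H ≥ L_g (b − a)/η. -/

import Mathlib

lemma aux_partial (s : ℕ → ℝ) (n : ℕ) :
    ∑ j ∈ Finset.range (n+1), (s j - if j = 0 then 0 else s (j-1)) = s n := by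
  induction n with
  | zero => simp
  | succ n ih => rw [Finset.sum_range_succ, ih]; simp

lemma aux_abel (s r : ℕ → ℝ) (n : ℕ) :
    ∑ j ∈ Finset.range n, (s j - if j = 0 then 0 else s (j-1)) * r j
      = ∑ j ∈ Finset.range n, s j * (r j - r (j+1))
        + (if n = 0 then 0 else s (n-1) * r n) := by
  induction n with
  | zero => simp
  | succ n ih =>
    rw [Finset.sum_range_succ, ih, Finset.sum_range_succ]
    cases n with
    | zero => simp; ring
    | succ m => simp only [Nat.succ_ne_zero, if_false, Nat.add_sub_cancel]; ring

lemma aux_iic {n : ℕ} (f : ℕ → ℝ) (J : Fin n) :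
    ∑ j ∈ Finset.Iic J, f j.val = ∑ j ∈ Finset.range (J.val+1), f j := by
  rw [show Finset.range (J.val+1) = Finset.Iic J.val from by ext; simp [Nat.lt_succ_iff],
    ← Fin.map_valEmbedding_Iic, Finset.sum_map]
  rfl

lemma aux_relu (x t : ℝ) : max (x - t) 0 = x - min x t := by
  rcases le_total x t with h | h
  · rw [min_eq_left h, max_eq_right (by linarith)]; ring
  · rw [min_eq_right h, max_eq_left (by linarith)]

/-- Universal approximation of a Lipschitz nonincreasing function by a
monotonicity-constrained single-hidden-layer ReLU network: for any
nonincreasing `Lg`-Lipschitz `g`, any interval `[a, b]` and any `η > 0`, there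
is a network `N(x) = Σ_h w_h ReLU(x - bias_h) + β` with nondecreasing biases
and nonpositive partial sums of weights such that `|N(x) - g(x)| ≤ η` on
`[a, b]`; moreover `H` can be taken with `H ≥ Lg (b - a)/η`. -/
theorem stmt_13 (g : ℝ → ℝ) (Lg : ℝ) (hg : Antitone g)
    (hlip : ∀ x y, |g x - g y| ≤ Lg * |x - y|)
    (a b : ℝ) (hab : a < b) (η : ℝ) (hη : 0 < η) :
    ∃ (H : ℕ), 0 < H ∧ Lg * (b - a) / η ≤ (H : ℝ) ∧
      ∃ (w : Fin H → ℝ) (bias : Fin H → ℝ) (β : ℝ),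
        Monotone bias ∧
        (∀ J : Fin H, ∑ j ∈ Finset.Iic J, w j ≤ 0) ∧
        ∀ x ∈ Set.Icc a b,
          |((∑ h : Fin H, w h * max (x - bias h) 0) + β) - g x| ≤ η := by
  have hLg : 0 ≤ Lg := by
    have h1 := hlip a b
    have h2 : |a - b| = b - a := by rw [abs_sub_comm]; exact abs_of_pos (by linarith)
    nlinarith [abs_nonneg (g a - g b)]
  set H : ℕ := ⌈Lg * (b - a) / η⌉₊ + 1 with hH
  have hHpos : 0 < H := Nat.succ_pos _
  have hHR : (0:ℝ) < H := by exact_mod_cast hHpos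
  have hHge : Lg * (b - a) / η ≤ (H : ℝ) := by
    have := Nat.le_ceil (Lg * (b - a) / η)
    push_cast [hH]
    linarith
  set δ : ℝ := (b - a) / H with hδ
  have hδpos : 0 < δ := div_pos (by linarith) hHR
  have hHδ : (H : ℝ) * δ = b - a := by rw [hδ]; field_simp [hHR.ne']
  have hLδ : Lg * δ ≤ η := by
    rw [div_le_iff₀ hη] at hHge
    rw [hδ, ← mul_div_assoc, div_le_iff₀ hHR]
    linarith
  -- grid and slopes
  set X : ℕ → ℝ := fun h => a + h * δ with hX
  have hXsucc : ∀ h : ℕ, X (h+1) = X h + δ := by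
    intro h; show a + (↑(h+1):ℝ) * δ = (a + h * δ) + δ; push_cast; ring
  have hXmono : ∀ i j : ℕ, i ≤ j → X i ≤ X j := by
    intro i j hij
    show a + (i:ℝ) * δ ≤ a + (j:ℝ) * δ
    have : (i:ℝ) ≤ (j:ℝ) := by exact_mod_cast hij
    nlinarith
  have hX0 : X 0 = a := by show a + (↑(0:ℕ):ℝ) * δ = a; push_cast; ring
  have hXH : X H = b := by show a + (H:ℝ) * δ = b; linarith
  set s : ℕ → ℝ := fun h => (g (X (h+1)) - g (X h)) / δ with hs
  set wn : ℕ → ℝ := fun j => s j - if j = 0 then 0 else s (j-1) with hwn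
  have hs_mul : ∀ h : ℕ, s h * δ = g (X (h+1)) - g (X h) := by
    intro h
    show (g (X (h+1)) - g (X h)) / δ * δ = _
    field_simp
  have hs_nonpos : ∀ h : ℕ, s h ≤ 0 := by
    intro h
    apply div_nonpos_of_nonpos_of_nonneg _ hδpos.le
    have : X h ≤ X (h+1) := by rw [hXsucc]; linarith
    linarith [hg this]
  have hs_lb : ∀ h : ℕ, -Lg ≤ s h := by
    intro h
    have h1 := hlip (X (h+1)) (X h)
    have h2 : |X (h+1) - X h| = δ := by rw [hXsucc]; simp [abs_of_pos hδpos]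
    rw [h2] at h1
    have h3 := neg_abs_le (g (X (h+1)) - g (X h))
    show -Lg ≤ (g (X (h+1)) - g (X h)) / δ
    rw [le_div_iff₀ hδpos]
    linarith
  refine ⟨H, hHpos, hHge, fun h => wn h.val, fun h => X h.val, g a, ?_, ?_, ?_⟩
  · -- monotone bias
    intro h h' hle
    exact hXmono _ _ hle
  · -- partial sums
    intro J
    rw [aux_iic wn J, hwn, aux_partial]
    exact hs_nonpos _
  · -- approximation
    intro x hx
    obtain ⟨hxa, hxb⟩ := hx
    show |(∑ h : Fin H, wn h.val * max (x - X h.val) 0) + g a - g x| ≤ η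
    set m : ℕ → ℝ := fun h => min x (X h) with hm
    have hm0 : m 0 = a := by show min x (X 0) = a; rw [hX0, min_eq_right hxa]
    have hmH : m H = x := by show min x (X H) = x; rw [hXH, min_eq_left hxb]
    have hm_le : ∀ h : ℕ, m h ≤ m (h+1) := by
      intro h
      exact min_le_min le_rfl (hXmono h (h+1) (Nat.le_succ h))
    have hm_diff : ∀ h : ℕ, m (h+1) - m h ≤ δ := by
      intro h
      show min x (X (h+1)) - min x (X h) ≤ δ
      rw [hXsucc]
      rcases le_total x (X h) with h' | h'
      · rw [min_eq_left h', min_eq_left (by linarith)]; linarith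
      · rw [min_eq_right h']
        have := min_le_right x (X h + δ)
        linarith
    -- the network equals the interpolant: error decomposition
    have key : (∑ h : Fin H, wn h.val * max (x - X h.val) 0) + g a - g x
        = ∑ h ∈ Finset.range H,
            (s h * (m (h+1) - m h) - (g (m (h+1)) - g (m h))) := by
      rw [Fin.sum_univ_eq_sum_range (fun h => wn h * max (x - X h) 0) H, hwn,
        aux_abel s (fun h => max (x - X h) 0) H]
      have hrH : max (x - X H) 0 = 0 := by rw [hXH]; exact max_eq_right (by linarith)
      simp only [hrH, mul_zero, ite_self, add_zero]
      have e1 : ∀ h ∈ Finset.range H,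
          s h * (max (x - X h) 0 - max (x - X (h+1)) 0) = s h * (m (h+1) - m h) := by
        intro h _
        rw [aux_relu, aux_relu]
        show _ = s h * (min x (X (h+1)) - min x (X h))
        ring
      have e2 : ∑ h ∈ Finset.range H, (g (m (h+1)) - g (m h)) = g x - g a := by
        rw [Finset.sum_range_sub (fun h => g (m h)), hm0, hmH]
      rw [Finset.sum_congr rfl e1, Finset.sum_sub_distrib, e2]
      ring
    -- the interval containing x
    set k : ℕ := min (⌊(x - a)/δ⌋₊) (H - 1) with hk
    have hkH : k < H := lt_of_le_of_lt (min_le_right _ _) (Nat.pred_lt hHpos.ne')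
    have hXk : X k ≤ x := by
      have h1 : (k:ℝ) ≤ (x - a)/δ := by
        have h2 : (k:ℝ) ≤ (⌊(x - a)/δ⌋₊ : ℝ) := by exact_mod_cast min_le_left _ _
        exact h2.trans (Nat.floor_le (div_nonneg (by linarith) hδpos.le))
      show a + (k:ℝ) * δ ≤ x
      rw [le_div_iff₀ hδpos] at h1
      linarith
    have hXk1 : x ≤ X (k+1) := by
      show x ≤ a + (↑(k+1):ℝ) * δ
      push_cast
      rcases le_or_gt (⌊(x - a)/δ⌋₊) (H - 1) with hc | hc
      · have hk' : k = ⌊(x - a)/δ⌋₊ := min_eq_left hc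
        have h1 := Nat.lt_floor_add_one ((x - a)/δ)
        rw [div_lt_iff₀ hδpos] at h1
        rw [hk']
        push_cast at *
        nlinarith
      · have hk' : k = H - 1 := min_eq_right hc.le
        have h2 : ((k:ℝ) + 1) = H := by
          rw [hk']
          have := Nat.sub_add_cancel hHpos
          exact_mod_cast congrArg (Nat.cast (R := ℝ)) this
        nlinarith
    -- all error terms vanish except k
    have hsingle : ∑ h ∈ Finset.range H,
        (s h * (m (h+1) - m h) - (g (m (h+1)) - g (m h)))
        = s k * (m (k+1) - m k) - (g (m (k+1)) - g (m k)) := by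
      apply Finset.sum_eq_single_of_mem k (Finset.mem_range.mpr hkH)
      intro h _ hne
      rcases lt_or_gt_of_ne hne with hlt | hgt
      · -- h < k : interval fully to the left of x
        have h1 : X (h+1) ≤ x := (hXmono (h+1) k hlt).trans hXk
        have h2 : X h ≤ x := (by rw [hXsucc]; linarith : X h ≤ X (h+1)).trans h1
        show s h * (min x (X (h+1)) - min x (X h)) - (g (min x (X (h+1))) - g (min x (X h))) = 0
        rw [min_eq_right h1, min_eq_right h2]
        have hd : X (h+1) - X h = δ := by rw [hXsucc]; ring
        rw [hd, hs_mul]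
        ring
      · -- h > k : interval fully to the right of x
        have h1 : x ≤ X h := hXk1.trans (hXmono (k+1) h hgt)
        have h2 : x ≤ X (h+1) := h1.trans (by rw [hXsucc]; linarith)
        show s h * (min x (X (h+1)) - min x (X h)) - (g (min x (X (h+1))) - g (min x (X h))) = 0
        rw [min_eq_left h1, min_eq_left h2]
        ring
    -- bound the single error term
    have hc0 : 0 ≤ m (k+1) - m k := by linarith [hm_le k]
    have hcδ : m (k+1) - m k ≤ δ := hm_diff k
    have hA1 : s k * (m (k+1) - m k) ≤ 0 := mul_nonpos_of_nonpos_of_nonneg (hs_nonpos k) hc0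
    have hA2 : -(Lg * δ) ≤ s k * (m (k+1) - m k) := by
      have h1 : -Lg * (m (k+1) - m k) ≤ s k * (m (k+1) - m k) :=
        mul_le_mul_of_nonneg_right (hs_lb k) hc0
      have h2 : Lg * (m (k+1) - m k) ≤ Lg * δ := mul_le_mul_of_nonneg_left hcδ hLg
      linarith
    have hB1 : g (m (k+1)) - g (m k) ≤ 0 := by linarith [hg (hm_le k)]
    have hB2 : -(Lg * δ) ≤ g (m (k+1)) - g (m k) := by
      have h1 := hlip (m (k+1)) (m k)
      rw [abs_of_nonneg hc0] at h1
      have h2 := neg_abs_le (g (m (k+1)) - g (m k))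
      have h3 : Lg * (m (k+1) - m k) ≤ Lg * δ := mul_le_mul_of_nonneg_left hcδ hLg
      linarith
    have : (∑ h : Fin H, wn h.val * max (x - X h.val) 0) + g a - g x
        = s k * (m (k+1) - m k) - (g (m (k+1)) - g (m k)) := by rw [key, hsingle]
    rw [this]
    rw [abs_le]
    constructor <;> linarith
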